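/- Let j ≥ 5 be odd, let a = φ_{j−2}, b = φ_{j+2}, d = φ_j (Fibonacci numbers), and let Γ = ⟨a, b⟩ be the numerical semigroup generated by a and b. Then for every l ≥ 0, the number of elements of Γ in the interval ((l−1)d, ld] equals min{l+1, d}. -/

import Mathlib

open Finset

namespace NSGaux

def gam (a b k : ℕ) : Prop := ∃ i m : ℕ, k = i * a + m * b

def apMem (a b k : ℕ) : Prop :=
  (∃ i, i < b ∧ k = i * a) ∨ (∃ m, 1 ≤ m ∧ m < a ∧ k = m * b) ∨ k = a * b

open scoped Classical in
noncomputable def S (a b d l : ℕ) : Finset ℕ :=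
  (Finset.Ioc ((l - 1) * d) (l * d)).filter (gam a b)

open scoped Classical in
noncomputable def Ap (a b d L : ℕ) : Finset ℕ :=
  (Finset.Ioc ((L - 1) * d) (L * d)).filter (apMem a b)

lemma mult_count (a x y : ℕ) (hxy : x ≤ y) :
    ((Finset.Ioc x y).filter (fun k => a ∣ k)).card = y / a - x / a := by
  classical
  have h1 : (Finset.Ioc 0 y).filter (fun k => a ∣ k)
      = (Finset.Ioc 0 x).filter (fun k => a ∣ k) ∪ (Finset.Ioc x y).filter (fun k => a ∣ k) := by
    rw [← Finset.filter_union, Finset.Ioc_union_Ioc_eq_Ioc (Nat.zero_le x) hxy]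
  have hdisj : Disjoint ((Finset.Ioc 0 x).filter (fun k => a ∣ k))
      ((Finset.Ioc x y).filter (fun k => a ∣ k)) := by
    apply Finset.disjoint_filter_filter
    rw [Finset.disjoint_left]
    intro t ht ht'
    simp only [Finset.mem_Ioc] at ht ht'
    omega
  have h2 := Finset.card_union_of_disjoint hdisj
  rw [← h1, Nat.Ioc_filter_dvd_card_eq_div, Nat.Ioc_filter_dvd_card_eq_div] at h2
  omega

variable {a b d : ℕ}

lemma ap_card_mid (ha2 : 2 ≤ a) (had : a < d) (hb2 : 2 * d < b)
    (hsum : a + b = 3 * d) (hprod : a * b = d * d + 1) (cop : Nat.Coprime a b)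
    {L : ℕ} (hL2 : 2 ≤ L) (hLd : L ≤ d) :
    (Ap a b d L).card = (L * d / a - (L - 1) * d / a) + (L * d / b - (L - 1) * d / b) := by
  classical
  have ha0 : 0 < a := by omega
  have hb0 : 0 < b := by omega
  have hLdd : L * d ≤ d * d := Nat.mul_le_mul_right d hLd
  have hub : (L - 1) * d ≤ L * d := Nat.mul_le_mul_right d (by omega)
  have hlow : d ≤ (L - 1) * d := by
    calc d = 1 * d := (Nat.one_mul d).symm
    _ ≤ (L - 1) * d := Nat.mul_le_mul_right d (by omega)
  have hset : Ap a b d L = (Finset.Ioc ((L - 1) * d) (L * d)).filter (fun k => a ∣ k)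
      ∪ (Finset.Ioc ((L - 1) * d) (L * d)).filter (fun k => b ∣ k) := by
    rw [← Finset.filter_or]
    apply Finset.filter_congr
    intro k hk
    simp only [Finset.mem_Ioc] at hk
    simp only [apMem, eq_iff_iff]
    constructor
    · rintro (⟨i, hib, rfl⟩ | ⟨m, hm1, hma, rfl⟩ | rfl)
      · exact Or.inl ⟨i, Nat.mul_comm i a⟩
      · exact Or.inr ⟨m, Nat.mul_comm m b⟩
      · exfalso; omega
    · rintro (⟨t, rfl⟩ | ⟨t, rfl⟩)
      · refine Or.inl ⟨t, ?_, Nat.mul_comm a t⟩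
        by_contra hcon
        push_neg at hcon
        have : a * b ≤ a * t := Nat.mul_le_mul_left a hcon
        omega
      · refine Or.inr (Or.inl ⟨t, ?_, ?_, Nat.mul_comm b t⟩)
        · by_contra hcon
          push_neg at hcon
          interval_cases t
          omega
        · by_contra hcon
          push_neg at hcon
          have : b * a ≤ b * t := Nat.mul_le_mul_left b hcon
          have h3 : b * a = a * b := Nat.mul_comm b a
          omega
  have hdisjab : Disjoint ((Finset.Ioc ((L - 1) * d) (L * d)).filter (fun k => a ∣ k))
      ((Finset.Ioc ((L - 1) * d) (L * d)).filter (fun k => b ∣ k)) := by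
    rw [Finset.disjoint_left]
    intro k hk1 hk2
    simp only [Finset.mem_filter, Finset.mem_Ioc] at hk1 hk2
    obtain ⟨⟨hk3, hk4⟩, hka⟩ := hk1
    obtain ⟨_, hkb⟩ := hk2
    have habk : a * b ∣ k := cop.mul_dvd_of_dvd_of_dvd hka hkb
    have : a * b ≤ k := Nat.le_of_dvd (by omega) habk
    omega
  rw [hset, Finset.card_union_of_disjoint hdisjab, mult_count a _ _ hub, mult_count b _ _ hub]

lemma cop (ha2 : 2 ≤ a) (hsum : a + b = 3 * d) (hprod : a * b = d * d + 1) :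
    Nat.Coprime a b := by
  have h1 : Nat.gcd a b ∣ a := Nat.gcd_dvd_left a b
  have h2 : Nat.gcd a b ∣ b := Nat.gcd_dvd_right a b
  have h9 : Nat.gcd a b ∣ 9 := by
    have h3 : Nat.gcd a b * Nat.gcd a b ∣ 9 * (d * d + 1) - 9 * (d * d) := by
      apply Nat.dvd_sub
      · rw [← hprod]; exact Dvd.dvd.mul_left (mul_dvd_mul h1 h2) 9
      · have h4 : 9 * (d * d) = (3 * d) * (3 * d) := by ring
        rw [h4, ← hsum]
        exact mul_dvd_mul (Dvd.dvd.add h1 h2) (Dvd.dvd.add h1 h2)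
    have h5 : 9 * (d * d + 1) - 9 * (d * d) = 9 := by omega
    rw [h5] at h3
    exact dvd_trans (Dvd.intro_left _ rfl) h3
  have h3 : ¬ (3 ∣ Nat.gcd a b) := by
    intro h3g
    have hab : 9 ∣ a * b := by
      obtain ⟨u, hu⟩ := h3g.trans h1
      obtain ⟨v, hv⟩ := h3g.trans h2
      exact ⟨u * v, by rw [hu, hv]; ring⟩
    rw [hprod] at hab
    have hd3 : d % 3 < 3 := Nat.mod_lt d (by norm_num)
    have hmm : d * d % 3 = (d % 3) * (d % 3) % 3 := Nat.mul_mod d d 3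
    interval_cases h : d % 3 <;> omega
  unfold Nat.Coprime
  have hg1 : Nat.gcd a b ≠ 0 := by
    intro h0
    have : a = 0 := Nat.eq_zero_of_gcd_eq_zero_left h0
    omega
  rcases h9 with ⟨t, ht⟩
  -- gcd ∣ 9, not divisible by 3 ⇒ gcd = 1
  have : Nat.gcd a b = 1 ∨ Nat.gcd a b = 3 ∨ Nat.gcd a b = 9 := by
    have h := Nat.le_of_dvd (by norm_num) ⟨t, ht⟩
    interval_cases hgab : Nat.gcd a b <;> omega
  rcases this with h | h | h
  · exact h
  · exact absurd (h ▸ dvd_refl _) h3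
  · exact absurd (h ▸ ⟨3, rfl⟩) h3

lemma key_mod (ha2 : 2 ≤ a) (had : a < d) (hsum : a + b = 3 * d) (hprod : a * b = d * d + 1)
    (cop : Nat.Coprime a b) {L : ℕ} (hL1 : 1 ≤ L) (hLd : L + 1 ≤ d) :
    b * (L * d % a) + a * (L * d % b) + 3 * L = a * b := by
  have ha0 : 0 < a := by omega
  have hb0 : 0 < b := by nlinarith
  set r := L * d % a with hr
  set s := L * d % b with hs
  have hra : r < a := Nat.mod_lt _ ha0
  have hsb : s < b := Nat.mod_lt _ hb0
  have hq1 : a * (L * d / a) + r = L * d := Nat.div_add_mod _ _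
  have hq2 : b * (L * d / b) + s = L * d := Nat.div_add_mod _ _
  set q1 := L * d / a
  set q2 := L * d / b
  set X := b * r + a * s + 3 * L with hX
  have hadvd : (a : ℤ) ∣ (X : ℤ) := by
    refine ⟨3 * L * b - b * q1 - L * d + s, ?_⟩
    have e1 : (L : ℤ) * d = a * q1 + r := by exact_mod_cast hq1.symm
    have e2 : (a : ℤ) + b = 3 * d := by exact_mod_cast hsum
    have e3 : (a : ℤ) * b = d * d + 1 := by exact_mod_cast hprod
    push_cast [hX]
    linear_combination (-(b:ℤ)) * e1 + (L:ℤ) * (d:ℤ) * e2 - 3 * (L:ℤ) * e3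
  have hbdvd : (b : ℤ) ∣ (X : ℤ) := by
    refine ⟨r + 3 * L * a - L * d - a * q2, ?_⟩
    have e1 : (L : ℤ) * d = b * q2 + s := by exact_mod_cast hq2.symm
    have e2 : (a : ℤ) + b = 3 * d := by exact_mod_cast hsum
    have e3 : (a : ℤ) * b = d * d + 1 := by exact_mod_cast hprod
    push_cast [hX]
    linear_combination (-(a:ℤ)) * e1 + (L:ℤ) * (d:ℤ) * e2 - 3 * (L:ℤ) * e3
  have habdvd : a * b ∣ X := by
    apply cop.mul_dvd_of_dvd_of_dvd <;> rw [← Int.natCast_dvd_natCast] <;> [exact hadvd; exact hbdvd]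
  have hXle : X ≤ 2 * (a * b) - 3 := by
    have h1 : b * (r + 1) ≤ b * a := Nat.mul_le_mul_left _ (by omega)
    have h2 : a * (s + 1) ≤ a * b := Nat.mul_le_mul_left _ (by omega)
    have h3 : b * (r + 1) = b * r + b := by ring
    have h4 : a * (s + 1) = a * s + a := by ring
    have h5 : b * a = a * b := Nat.mul_comm b a
    have hab9 : 3 * d ≤ a * b := by nlinarith
    omega
  have hX0 : 0 < X := by omega
  obtain ⟨t, ht⟩ := habdvd
  have hab0 : 0 < a * b := by positivity
  have ht1 : t = 1 := by
    rcases Nat.lt_or_ge t 1 with h | h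
    · interval_cases t <;> omega
    · rcases Nat.lt_or_ge t 2 with h' | h'
      · omega
      · exfalso
        have : a * b * 2 ≤ a * b * t := Nat.mul_le_mul_left _ h'
        omega
  rw [ht1, mul_one] at ht
  omega

lemma div_sum (ha2 : 2 ≤ a) (had : a < d) (hsum : a + b = 3 * d) (hprod : a * b = d * d + 1)
    (cop : Nat.Coprime a b) {L : ℕ} (hL1 : 1 ≤ L) (hLd : L + 1 ≤ d)
    (key : b * (L * d % a) + a * (L * d % b) + 3 * L = a * b) :
    L * d / a + L * d / b + 1 = 3 * L := by
  have ha0 : 0 < a := by omega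
  have hb0 : 0 < b := by nlinarith
  have hq1 : a * (L * d / a) + L * d % a = L * d := Nat.div_add_mod _ _
  have hq2 : b * (L * d / b) + L * d % b = L * d := Nat.div_add_mod _ _
  set r := L * d % a
  set s := L * d % b
  set q1 := L * d / a
  set q2 := L * d / b
  -- (d*d+1) * (q1 + q2 + 1) = 3L * (d*d+1)
  have main : ((d : ℤ) * d + 1) * ((q1 : ℤ) + q2 + 1 - 3 * L) = 0 := by
    have e1 : (a : ℤ) * q1 + r = L * d := by exact_mod_cast hq1
    have e2 : (b : ℤ) * q2 + s = L * d := by exact_mod_cast hq2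
    have e3 : (a : ℤ) + b = 3 * d := by exact_mod_cast hsum
    have e4 : (a : ℤ) * b = d * d + 1 := by exact_mod_cast hprod
    have e5 : (b : ℤ) * r + a * s + 3 * L = a * b := by exact_mod_cast key
    linear_combination (-((q1:ℤ) + q2 + 1)) * e4 + (b:ℤ) * e1 + (a:ℤ) * e2 + ((L:ℤ)*(d:ℤ)) * e3 - e5
  have h2 : (q1 : ℤ) + q2 + 1 - 3 * L = 0 := by
    rcases mul_eq_zero.mp main with h | h
    · exfalso; nlinarith [sq_nonneg ((d:ℤ))]
    · exact h
  omega

lemma div_dd_a (ha2 : 2 ≤ a) (hprod : a * b = d * d + 1) (hb1 : 1 ≤ b) :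
    d * d / a = b - 1 := by
  have h : d * d = a * (b - 1) + (a - 1) := by
    have e : (a:ℤ) * b = (d:ℤ) * d + 1 := by exact_mod_cast hprod
    zify [show 1 ≤ b from hb1, show 1 ≤ a from by omega]
    linear_combination -e
  rw [h, Nat.mul_add_div (by omega), Nat.div_eq_of_lt (by omega)]
  omega

lemma div_dd_b (ha2 : 2 ≤ a) (hprod : a * b = d * d + 1) (hb1 : 2 ≤ b) :
    d * d / b = a - 1 := by
  have h : d * d = b * (a - 1) + (b - 1) := by
    have e : (a:ℤ) * b = (d:ℤ) * d + 1 := by exact_mod_cast hprod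
    zify [show 1 ≤ b from by omega, show 1 ≤ a from by omega]
    linear_combination -e
  rw [h, Nat.mul_add_div (by omega), Nat.div_eq_of_lt (by omega)]
  omega

lemma step_card (ha2 : 2 ≤ a) (had : a < d) (hb2 : 2 * d < b)
    (hsum : a + b = 3 * d) (hprod : a * b = d * d + 1) (cop : Nat.Coprime a b)
    {l : ℕ} (hl : 1 ≤ l) :
    (S a b d (l + 3)).card = (Ap a b d (l + 3)).card + (S a b d l).card := by
  classical
  have hd0 : 0 < d := by omega
  have e1 : (l + 3 - 1) * d = (l - 1) * d + 3 * d := by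
    rw [show l + 3 - 1 = (l - 1) + 3 by omega, add_mul]
  have e2 : (l + 3) * d = l * d + 3 * d := by rw [add_mul]
  have himage : S a b d (l + 3) = Ap a b d (l + 3) ∪ (S a b d l).image (· + 3 * d) := by
    ext k
    simp only [S, Ap, Finset.mem_filter, Finset.mem_union, Finset.mem_image, Finset.mem_Ioc]
    constructor
    · rintro ⟨⟨hk1, hk2⟩, i, m, rfl⟩
      rcases Nat.eq_zero_or_pos m with hm | hm
      · -- k = i * a
        subst hm
        simp only [Nat.zero_mul, Nat.mul_zero, Nat.add_zero, Nat.zero_add] at hk1 hk2 ⊢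
        rcases Nat.lt_or_ge i b with hib | hib
        · exact Or.inl ⟨⟨hk1, hk2⟩, Or.inl ⟨i, hib, rfl⟩⟩
        · rcases Nat.eq_or_lt_of_le hib with hib' | hib'
          · exact Or.inl ⟨⟨hk1, hk2⟩, Or.inr (Or.inr (by rw [← hib', Nat.mul_comm]))⟩
          · -- i ≥ b + 1
            refine Or.inr ⟨(i - b - 1) * a + (a - 1) * b, ⟨⟨?_, ?_⟩, ⟨i - b - 1, a - 1, rfl⟩⟩, ?_⟩
            all_goals
              have es : (3:ℤ) * d = a + b := by exact_mod_cast hsum.symm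
              have ekey : (i - b - 1) * a + (a - 1) * b + 3 * d = i * a := by
                zify [show b ≤ i from by omega, show 1 ≤ i - b from by omega,
                  show 1 ≤ a from by omega]
                linear_combination es
              omega
      · rcases Nat.eq_zero_or_pos i with hi | hi
        · -- k = m * b
          subst hi
          simp only [Nat.zero_mul, Nat.mul_zero, Nat.add_zero, Nat.zero_add] at hk1 hk2 ⊢
          rcases Nat.lt_or_ge m a with hma | hma
          · exact Or.inl ⟨⟨hk1, hk2⟩, Or.inr (Or.inl ⟨m, hm, hma, rfl⟩)⟩
          · rcases Nat.eq_or_lt_of_le hma with hma' | hma'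
            · exact Or.inl ⟨⟨hk1, hk2⟩, Or.inr (Or.inr (by rw [← hma']))⟩
            · refine Or.inr ⟨(m - a - 1) * b + (b - 1) * a, ⟨⟨?_, ?_⟩, ⟨b - 1, m - a - 1, by ring⟩⟩, ?_⟩
              all_goals
                have es : (3:ℤ) * d = a + b := by exact_mod_cast hsum.symm
                have ekey : (m - a - 1) * b + (b - 1) * a + 3 * d = m * b := by
                  zify [show a ≤ m from by omega, show 1 ≤ m - a from by omega,
                    show 1 ≤ b from by omega]
                  linear_combination es
                omega
        · -- i ≥ 1, m ≥ 1
          refine Or.inr ⟨(i - 1) * a + (m - 1) * b, ⟨⟨?_, ?_⟩, ⟨i - 1, m - 1, rfl⟩⟩, ?_⟩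
          all_goals
            have es : (3:ℤ) * d = a + b := by exact_mod_cast hsum.symm
            have ekey : (i - 1) * a + (m - 1) * b + 3 * d = i * a + m * b := by
              zify [show 1 ≤ i from hi, show 1 ≤ m from hm]
              linear_combination es
            omega
    · rintro (⟨⟨hk1, hk2⟩, hap⟩ | ⟨k', ⟨⟨hk1, hk2⟩, i, m, rfl⟩, rfl⟩)
      · refine ⟨⟨hk1, hk2⟩, ?_⟩
        rcases hap with ⟨i, _, rfl⟩ | ⟨m, _, _, rfl⟩ | rfl
        · exact ⟨i, 0, by ring⟩
        · exact ⟨0, m, by ring⟩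
        · exact ⟨b, 0, by ring⟩
      · refine ⟨⟨by omega, by omega⟩, ⟨i + 1, m + 1, ?_⟩⟩
        have h3 : 3 * d = a + b := hsum.symm
        rw [h3]; ring
  have hdisj : Disjoint (Ap a b d (l + 3)) ((S a b d l).image (· + 3 * d)) := by
    rw [Finset.disjoint_left]
    rintro k hk1 hk2
    simp only [Ap, Finset.mem_filter, Finset.mem_Ioc] at hk1
    simp only [S, Finset.mem_image, Finset.mem_filter, Finset.mem_Ioc] at hk2
    obtain ⟨k', ⟨_, i', m', rfl⟩, rfl⟩ := hk2
    obtain ⟨⟨hb1, hb2⟩, hap⟩ := hk1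
    have hkey : i' * a + m' * b + 3 * d = (i' + 1) * a + (m' + 1) * b := by
      rw [hsum.symm]; ring
    rw [hkey] at hb1 hb2 hap
    have ha0 : 0 < a := by omega
    have hb0 : 0 < b := by omega
    rcases hap with ⟨i, hib, heq⟩ | ⟨m, hm1, hma, heq⟩ | heq
    · -- i * a = (i'+1) a + (m'+1) b
      have hgt : (i' + 1) * a < i * a := by
        have : 0 < (m' + 1) * b := by positivity
        omega
      have hii : i' + 1 < i := Nat.lt_of_mul_lt_mul_right hgt
      set u := i - i' - 1 with hu
      have hu1 : 1 ≤ u := by omega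
      have hmul : u * a = (m' + 1) * b := by
        have hieq : i = u + (i' + 1) := by omega
        have hq : i * a = (u + (i' + 1)) * a := by rw [← hieq]
        have hsp : (u + (i' + 1)) * a = u * a + (i' + 1) * a := add_mul _ _ _
        omega
      have hbu : b ∣ u := by
        refine (Nat.Coprime.dvd_of_dvd_mul_right (k := b) (n := a) (m := u) cop.symm) ?_
        exact ⟨m' + 1, hmul.trans (Nat.mul_comm _ _)⟩
      have : b ≤ u := Nat.le_of_dvd (by omega) hbu
      omega
    · have hgt : (m' + 1) * b < m * b := by
        have : 0 < (i' + 1) * a := by positivity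
        omega
      have hmm : m' + 1 < m := Nat.lt_of_mul_lt_mul_right hgt
      set v := m - m' - 1 with hv
      have hv1 : 1 ≤ v := by omega
      have hmul : v * b = (i' + 1) * a := by
        have hieq : m = v + (m' + 1) := by omega
        have hq : m * b = (v + (m' + 1)) * b := by rw [← hieq]
        have hsp : (v + (m' + 1)) * b = v * b + (m' + 1) * b := add_mul _ _ _
        omega
      have hav : a ∣ v := by
        refine (Nat.Coprime.dvd_of_dvd_mul_right (k := a) (n := b) (m := v) cop) ?_
        exact ⟨i' + 1, hmul.trans (Nat.mul_comm _ _)⟩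
      have : a ≤ v := Nat.le_of_dvd (by omega) hav
      omega
    · -- a*b = (i'+1) a + (m'+1) b
      have hm'a : m' + 1 < a := by
        by_contra hcon
        push_neg at hcon
        have h1 : a * b ≤ (m' + 1) * b := Nat.mul_le_mul_right _ hcon
        have h2 : 0 < (i' + 1) * a := by positivity
        omega
      have hmul : b * (a - (m' + 1)) = (i' + 1) * a := by
        have hz : (b:ℤ) * ((a:ℤ) - (m' + 1)) = ((i':ℤ) + 1) * a := by
          have heqz : ((a:ℤ) * b) = ((i':ℤ) + 1) * a + ((m':ℤ) + 1) * b := by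
            exact_mod_cast heq.symm
          linear_combination heqz
        have hle : m' + 1 ≤ a := by omega
        zify [hle]
        exact hz
      have hbd : b ∣ (i' + 1) * a := ⟨a - (m' + 1), by rw [← hmul]⟩
      have hbi : b ∣ i' + 1 := (Nat.Coprime.dvd_of_dvd_mul_right (k := b) (n := a) cop.symm) hbd
      have hble : b ≤ i' + 1 := Nat.le_of_dvd (by omega) hbi
      have h1 : b * a ≤ (i' + 1) * a := Nat.mul_le_mul_right _ hble
      have h2 : 0 < (m' + 1) * b := by positivity
      have h3 : b * a = a * b := Nat.mul_comm b a
      omega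
  rw [himage, Finset.card_union_of_disjoint hdisj,
    Finset.card_image_of_injective _ (add_left_injective (3 * d))]

lemma ap_bound (ha2 : 2 ≤ a) (had : a < d) (hprod : a * b = d * d + 1)
    {k : ℕ} (hk : apMem a b k) : k ≤ a * b := by
  have hb0 : 0 < b := by nlinarith
  rcases hk with ⟨i, hib, rfl⟩ | ⟨m, hm1, hma, rfl⟩ | rfl
  · have : (i + 1) * a ≤ b * a := Nat.mul_le_mul_right a hib
    have h2 : (i + 1) * a = i * a + a := by ring
    have h3 : b * a = a * b := Nat.mul_comm b a
    omega
  · have : (m + 1) * b ≤ a * b := Nat.mul_le_mul_right b hma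
    have h2 : (m + 1) * b = m * b + b := by ring
    omega
  · exact le_refl _

lemma ap_card_top (ha2 : 2 ≤ a) (had : a < d) (hprod : a * b = d * d + 1) :
    (Ap a b d (d + 1)).card = 1 := by
  classical
  have hb0 : 0 < b := by nlinarith
  have hset : Ap a b d (d + 1) = {a * b} := by
    ext k
    simp only [Ap, Finset.mem_filter, Finset.mem_Ioc, Finset.mem_singleton]
    have e1 : (d + 1 - 1) * d = d * d := by simp
    have e2 : (d + 1) * d = d * d + d := by ring
    constructor
    · rintro ⟨⟨hk1, hk2⟩, hap⟩
      rcases hap with ⟨i, hib, rfl⟩ | ⟨m, hm1, hma, rfl⟩ | rfl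
      · exfalso
        have h1 : (i + 1) * a ≤ b * a := Nat.mul_le_mul_right a hib
        have h2 : (i + 1) * a = i * a + a := by ring
        have h3 : b * a = a * b := Nat.mul_comm b a
        omega
      · exfalso
        have h1 : (m + 1) * b ≤ a * b := Nat.mul_le_mul_right b hma
        have h2 : (m + 1) * b = m * b + b := by ring
        have hbd : d < b := by nlinarith
        omega
      · rfl
    · rintro rfl
      refine ⟨⟨?_, ?_⟩, Or.inr (Or.inr rfl)⟩ <;> omega
  rw [hset, Finset.card_singleton]

lemma ap_card_zero (ha2 : 2 ≤ a) (had : a < d) (hprod : a * b = d * d + 1)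
    {L : ℕ} (hL : d + 2 ≤ L) : (Ap a b d L).card = 0 := by
  classical
  rw [Finset.card_eq_zero]
  ext k
  simp only [Ap, Finset.mem_filter, Finset.mem_Ioc, Finset.notMem_empty, iff_false, not_and]
  rintro ⟨hk1, hk2⟩ hap
  have hkb := ap_bound ha2 had hprod hap
  have h1 : (d + 1) * d ≤ (L - 1) * d := Nat.mul_le_mul_right d (by omega)
  have h2 : (d + 1) * d = d * d + d := by ring
  omega

lemma base1 (ha2 : 2 ≤ a) (had : a < d) (hb2 : 2 * d < b) (hda : d / a = 2) :
    (S a b d 1).card = 2 := by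
  classical
  have ha0 : 0 < a := by omega
  have hset : S a b d 1 = {a, 2 * a} := by
    ext k
    simp only [S, Finset.mem_filter, Finset.mem_Ioc, Finset.mem_insert, Finset.mem_singleton,
      Nat.one_mul, Nat.zero_mul]
    constructor
    · rintro ⟨⟨hk1, hk2⟩, i, m, rfl⟩
      have hm : m = 0 := by
        by_contra hm
        have : b ≤ m * b := Nat.le_mul_of_pos_left b (by omega)
        omega
      subst hm
      simp only [Nat.zero_mul, Nat.mul_zero, Nat.zero_add, Nat.add_zero] at *
      have hi2 : i ≤ 2 := by
        rw [← hda]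
        exact (Nat.le_div_iff_mul_le ha0).mpr hk2
      interval_cases i <;> omega
    · have h2a : 2 * a ≤ d := (Nat.le_div_iff_mul_le ha0).mp (by omega)
      rintro (rfl | rfl)
      · exact ⟨⟨by omega, by omega⟩, 1, 0, by ring⟩
      · exact ⟨⟨by omega, by omega⟩, 2, 0, by ring⟩
  rw [hset, Finset.card_insert_of_notMem (by simp; omega), Finset.card_singleton]

lemma base2 (ha2 : 2 ≤ a) (had : a < d) (hb2 : 2 * d < b) (hda : d / a = 2)
    (h2da : 2 * d / a = 5) : (S a b d 2).card = 3 := by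
  classical
  have ha0 : 0 < a := by omega
  have hset : S a b d 2 = {3 * a, 4 * a, 5 * a} := by
    ext k
    simp only [S, Finset.mem_filter, Finset.mem_Ioc, Finset.mem_insert, Finset.mem_singleton,
      Nat.one_mul]
    have e1 : (2 - 1) * d = d := by norm_num
    constructor
    · rintro ⟨⟨hk1, hk2⟩, i, m, rfl⟩
      have hm : m = 0 := by
        by_contra hm
        have : b ≤ m * b := Nat.le_mul_of_pos_left b (by omega)
        omega
      subst hm
      simp only [Nat.zero_mul, Nat.mul_zero, Nat.zero_add, Nat.add_zero] at *
      have hi5 : i ≤ 5 := by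
        rw [← h2da]
        exact (Nat.le_div_iff_mul_le ha0).mpr hk2
      have hi3 : ¬ (i ≤ 2) := by
        intro hcon
        have : i * a ≤ d := by
          rw [← hda] at hcon
          exact (Nat.le_div_iff_mul_le ha0).mp hcon
        omega
      interval_cases i <;> omega
    · have h5a : 5 * a ≤ 2 * d := (Nat.le_div_iff_mul_le ha0).mp (by omega)
      have h3a : ¬ (3 * a ≤ d) := fun hcon =>
        absurd ((Nat.le_div_iff_mul_le ha0).mpr hcon) (by omega)
      rintro (rfl | rfl | rfl)
      · exact ⟨⟨by omega, by omega⟩, 3, 0, by ring⟩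
      · exact ⟨⟨by omega, by omega⟩, 4, 0, by ring⟩
      · exact ⟨⟨by omega, by omega⟩, 5, 0, by ring⟩
  rw [hset, Finset.card_insert_of_notMem (by simp; omega),
    Finset.card_insert_of_notMem (by simp; omega), Finset.card_singleton]

lemma base3 (ha2 : 2 ≤ a) (had : a < d) (hb2 : 2 * d < b) (hsum : a + b = 3 * d)
    (cop : Nat.Coprime a b) (h2da : 2 * d / a = 5) (h3da : 3 * d / a = 7) :
    (S a b d 3).card = 4 := by
  classical
  have ha0 : 0 < a := by omega
  have hnab : ¬ (a ∣ b) := by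
    intro h
    have h1 : a ∣ 1 := cop ▸ Nat.dvd_gcd dvd_rfl h
    have := Nat.dvd_one.mp h1
    omega
  have hset : S a b d 3 = {6 * a, 7 * a, b, a + b} := by
    ext k
    simp only [S, Finset.mem_filter, Finset.mem_Ioc, Finset.mem_insert, Finset.mem_singleton]
    have e1 : (3 - 1) * d = 2 * d := by norm_num
    rw [e1]
    constructor
    · rintro ⟨⟨hk1, hk2⟩, i, m, rfl⟩
      have hm : m ≤ 1 := by
        by_contra hm
        have : 2 * b ≤ m * b := Nat.mul_le_mul_right b (by omega)
        omega
      interval_cases m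
      · simp only [Nat.zero_mul, Nat.mul_zero, Nat.zero_add, Nat.add_zero] at *
        have hi7 : i ≤ 7 := by
          rw [← h3da]
          exact (Nat.le_div_iff_mul_le ha0).mpr hk2
        have hi6 : ¬ (i ≤ 5) := by
          intro hcon
          have : i * a ≤ 2 * d := by
            rw [← h2da] at hcon
            exact (Nat.le_div_iff_mul_le ha0).mp hcon
          omega
        interval_cases i <;> omega
      · simp only [Nat.one_mul] at *
        have hia : i * a ≤ a := by omega
        have hi1 : i ≤ 1 := by
          by_contra hcon
          have : 2 * a ≤ i * a := Nat.mul_le_mul_right a (by omega)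
          omega
        interval_cases i <;> omega
    · have h7a : 7 * a ≤ 3 * d := (Nat.le_div_iff_mul_le ha0).mp (by omega)
      have h6a : ¬ (6 * a ≤ 2 * d) := fun hcon =>
        absurd ((Nat.le_div_iff_mul_le ha0).mpr hcon) (by omega)
      rintro (rfl | rfl | rfl | rfl)
      · exact ⟨⟨by omega, by omega⟩, 6, 0, by ring⟩
      · exact ⟨⟨by omega, by omega⟩, 7, 0, by ring⟩
      · exact ⟨⟨by omega, by omega⟩, 0, 1, by ring⟩
      · exact ⟨⟨by omega, by omega⟩, 1, 1, by ring⟩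
  have hb5 : b ≠ 5 * a := fun h => hnab ⟨5, by omega⟩
  have hb6 : b ≠ 6 * a := fun h => hnab ⟨6, by omega⟩
  have hb7 : b ≠ 7 * a := fun h => hnab ⟨7, by omega⟩
  rw [hset, Finset.card_insert_of_notMem (by simp; omega),
    Finset.card_insert_of_notMem (by simp; omega),
    Finset.card_insert_of_notMem (by simp; omega), Finset.card_singleton]

lemma cassini_odd : ∀ p : ℕ, Nat.fib (2*p+3) * Nat.fib (2*p+5) = Nat.fib (2*p+4) * Nat.fib (2*p+4) + 1 := by
  intro p
  induction p with
  | zero => decide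
  | succ q ih =>
    set x := Nat.fib (2*q+3) with hx
    set y := Nat.fib (2*q+4) with hy
    have h1 : Nat.fib (2*q+5) = x + y := by
      rw [show 2*q+5 = (2*q+3)+2 from by ring, Nat.fib_add_two,
        show 2*q+3+1 = 2*q+4 from by ring]
    have h2 : Nat.fib (2*q+6) = y + (x + y) := by
      rw [show 2*q+6 = (2*q+4)+2 from by ring, Nat.fib_add_two,
        show 2*q+4+1 = 2*q+5 from by ring, h1]
    have h3 : Nat.fib (2*q+7) = (x + y) + (y + (x + y)) := by
      rw [show 2*q+7 = (2*q+5)+2 from by ring, Nat.fib_add_two,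
        show 2*q+5+1 = 2*q+6 from by ring, h1, h2]
    rw [show 2*(q+1)+3 = 2*q+5 from by ring, show 2*(q+1)+5 = 2*q+7 from by ring,
      show 2*(q+1)+4 = 2*q+6 from by ring, h1, h2, h3]
    rw [h1] at ih
    zify at ih ⊢
    linear_combination ih

lemma cnt (ha2 : 2 ≤ a) (had : a < d) (hd5 : 5 ≤ d) (hb2 : 2 * d < b)
    (hsum : a + b = 3 * d) (hprod : a * b = d * d + 1) :
    ∀ l, 1 ≤ l → (S a b d l).card = min (l + 1) d := by
  have hcop : Nat.Coprime a b := cop ha2 hsum hprod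
  have hb0 : 0 < b := by omega
  have ha0 : 0 < a := by omega
  have divsum : ∀ L, 1 ≤ L → L + 1 ≤ d → L * d / a + L * d / b + 1 = 3 * L := fun L h1 h2 =>
    div_sum ha2 had hsum hprod hcop h1 h2 (key_mod ha2 had hsum hprod hcop h1 h2)
  have hdb : d / b = 0 := Nat.div_eq_of_lt (by omega)
  have h2db : 2 * d / b = 0 := Nat.div_eq_of_lt hb2
  have h3db : 3 * d / b = 1 := Nat.div_eq_of_lt_le (by omega) (by omega)
  have hda : d / a = 2 := by
    have h := divsum 1 (by omega) (by omega)
    rw [Nat.one_mul] at h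
    omega
  have h2da : 2 * d / a = 5 := by
    have h := divsum 2 (by omega) (by omega)
    omega
  have h3da : 3 * d / a = 7 := by
    have h := divsum 3 (by omega) (by omega)
    omega
  intro l
  induction l using Nat.strong_induction_on with
  | _ l ih =>
    intro hl1
    rcases Nat.lt_or_ge l 4 with hl4 | hl4
    · -- base cases
      interval_cases l
      · rw [base1 ha2 had hb2 hda, Nat.min_def]
        split <;> omega
      · rw [base2 ha2 had hb2 hda h2da, Nat.min_def]
        split <;> omega
      · rw [base3 ha2 had hb2 hsum hcop h2da h3da, Nat.min_def]
        split <;> omega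
    · -- step
      set l' := l - 3 with hl'
      have hl'1 : 1 ≤ l' := by omega
      have hstep := step_card ha2 had hb2 hsum hprod hcop hl'1
      have hl3 : l' + 3 = l := by omega
      rw [hl3] at hstep
      have hih := ih l' (by omega) hl'1
      have hmono_a : (l - 1) * d / a ≤ l * d / a :=
        Nat.div_le_div_right (Nat.mul_le_mul_right d (by omega))
      have hmono_b : (l - 1) * d / b ≤ l * d / b :=
        Nat.div_le_div_right (Nat.mul_le_mul_right d (by omega))
      have hapcard : (Ap a b d l).card = min (l + 1) d - min (l' + 1) d := by
        rcases Nat.lt_or_ge l d with hld | hld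
        · -- l ≤ d - 1 : Ap card = 3
          have hmid := ap_card_mid ha2 had hb2 hsum hprod hcop (L := l) (by omega) (by omega)
          have hds1 := divsum l (by omega) (by omega)
          have hds2 := divsum (l - 1) (by omega) (by omega)
          rw [hmid]
          rw [Nat.min_def, Nat.min_def]
          split <;> split <;> omega
        · rcases Nat.eq_or_lt_of_le hld with hld' | hld'
          · -- l = d : Ap card = 2
            have hmid := ap_card_mid ha2 had hb2 hsum hprod hcop (L := l) (by omega) (by omega)
            have hds2 := divsum (l - 1) (by omega) (by omega)
            have hdd_a : d * d / a = b - 1 := div_dd_a ha2 hprod (by omega)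
            have hdd_b : d * d / b = a - 1 := div_dd_b ha2 hprod (by omega)
            have ea : l * d / a = d * d / a := by rw [← hld']
            have eb : l * d / b = d * d / b := by rw [← hld']
            rw [hmid, Nat.min_def, Nat.min_def]
            split <;> split <;> omega
          · rcases Nat.eq_or_lt_of_le hld' with hld'' | hld'' 
            · -- l = d + 1 : Ap card = 1
              have h1 := ap_card_top ha2 had hprod (d := d)
              have hld3 : d + 1 = l := by omega
              rw [hld3] at h1
              rw [h1, Nat.min_def, Nat.min_def]
              split <;> split <;> omega
            · -- l ≥ d + 2 : Ap card = 0
              have h0 := ap_card_zero ha2 had hprod (L := l) (by omega)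
              rw [h0, Nat.min_def, Nat.min_def]
              split <;> split <;> omega
      have hminle : min (l' + 1) d ≤ min (l + 1) d := by
        rw [Nat.min_def, Nat.min_def]
        split <;> split <;> omega
      rw [hstep, hapcard, hih]
      omega

end NSGaux

open NSGaux in
/-- For odd `j ≥ 5`, `a = φ_{j−2}`, `b = φ_{j+2}`, `d = φ_j` and `Γ = ⟨a,b⟩`: for every
`l ≥ 0` the number of elements of `Γ` in `((l−1)d, ld]` equals `min(l+1, d)`. -/
theorem distribution_case_d (j : ℕ) (hj : 5 ≤ j) (hodd : Odd j) (l : ℕ) :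
    Nat.card {k : ℕ // (∃ i m : ℕ, k = i * Nat.fib (j - 2) + m * Nat.fib (j + 2)) ∧
      ((l : ℤ) - 1) * Nat.fib j < (k : ℤ) ∧ (k : ℤ) ≤ (l : ℤ) * Nat.fib j} =
      min (l + 1) (Nat.fib j) := by
  obtain ⟨n, rfl⟩ : ∃ n, j = n + 5 := ⟨j - 5, by omega⟩
  set a := Nat.fib (n + 3) with haeq
  set d := Nat.fib (n + 5) with hdeq
  set b := Nat.fib (n + 7) with hbeq
  have ej2 : n + 5 - 2 = n + 3 := rfl
  have ej2' : n + 5 + 2 = n + 7 := rfl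
  have hf4pos : 0 < Nat.fib (n + 4) := Nat.fib_pos.mpr (by omega)
  have hf2pos : 0 < Nat.fib (n + 2) := Nat.fib_pos.mpr (by omega)
  have h5 : d = Nat.fib (n + 4) + a := by
    rw [hdeq, haeq, show n + 5 = (n + 3) + 2 from rfl, Nat.fib_add_two,
      show n + 3 + 1 = n + 4 from rfl]
    omega
  have h6 : Nat.fib (n + 6) = a + Nat.fib (n + 4) + Nat.fib (n + 4) := by
    rw [show n + 6 = (n + 4) + 2 from rfl, Nat.fib_add_two,
      show n + 4 + 1 = n + 5 from rfl, ← hdeq, h5]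
    omega
  have h7 : b = d + Nat.fib (n + 6) := by
    rw [hbeq, show n + 7 = (n + 5) + 2 from rfl, Nat.fib_add_two,
      show n + 5 + 1 = n + 6 from rfl, ← hdeq]
  have h4 : Nat.fib (n + 4) = a + Nat.fib (n + 2) := by
    rw [haeq, show n + 4 = (n + 2) + 2 from rfl, Nat.fib_add_two,
      show n + 2 + 1 = n + 3 from rfl]
    omega
  have ha2 : 2 ≤ a := by
    have h := Nat.fib_mono (show 3 ≤ n + 3 by omega)
    have e : Nat.fib 3 = 2 := rfl
    omega
  have hd5 : 5 ≤ d := by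
    have h := Nat.fib_mono (show 5 ≤ n + 5 by omega)
    have e : Nat.fib 5 = 5 := rfl
    omega
  have had : a < d := by omega
  have hb2 : 2 * d < b := by omega
  have hsum : a + b = 3 * d := by omega
  have hprod : a * b = d * d + 1 := by
    obtain ⟨p, hp⟩ : ∃ p, n = 2 * p := by
      obtain ⟨t, ht⟩ := hodd
      exact ⟨n / 2, by omega⟩
    have hc := cassini_odd p
    rw [← hp] at hc
    -- hc : a * d = fib (n+4) * fib (n+4) + 1
    have hcc : a * d = Nat.fib (n + 4) * Nat.fib (n + 4) + 1 := by
      rw [haeq, hdeq]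
      convert hc using 3 <;> omega
    have hF4 : ((Nat.fib (n + 4)) : ℤ) = (d : ℤ) - (a : ℤ) := by
      have h5' : d = Nat.fib (n + 4) + a := h5
      omega
    have hzc : (a : ℤ) * d = ((d : ℤ) - a) * ((d : ℤ) - a) + 1 := by
      have hccz : (a : ℤ) * d = ((Nat.fib (n + 4)) : ℤ) * ((Nat.fib (n + 4)) : ℤ) + 1 := by
        exact_mod_cast hcc
      rw [hF4] at hccz
      exact hccz
    have hb3 : (b : ℤ) = 3 * (d : ℤ) - a := by omega
    zify
    linear_combination (a : ℤ) * hb3 + hzc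
  have efold : Nat.fib (n + 5 - 2) = a := by rw [ej2]
  simp only [efold]
  rcases Nat.eq_zero_or_pos l with rfl | hl1
  · -- l = 0 : the set is {0}
    have he : {k : ℕ // (∃ i m : ℕ, k = i * a + m * b) ∧
        (((0:ℕ) : ℤ) - 1) * d < (k : ℤ) ∧ (k : ℤ) ≤ ((0:ℕ) : ℤ) * d} ≃
        {k : ℕ // k ∈ ({0} : Finset ℕ)} := by
      apply Equiv.subtypeEquivRight
      intro k
      simp only [Finset.mem_singleton]
      constructor
      · rintro ⟨-, -, hk2⟩
        have : (k : ℤ) ≤ 0 := by simpa using hk2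
        exact_mod_cast le_antisymm this (by positivity)
      · rintro rfl
        refine ⟨⟨0, 0, by ring⟩, ?_, by simp⟩
        have : (0:ℤ) < (d:ℤ) := by exact_mod_cast (by omega : 0 < d)
        push_cast
        nlinarith
    rw [Nat.card_congr he, Nat.card_eq_finsetCard, Finset.card_singleton]
    rw [Nat.min_def]
    split <;> omega
  · have he : {k : ℕ // (∃ i m : ℕ, k = i * a + m * b) ∧
        ((l : ℤ) - 1) * d < (k : ℤ) ∧ (k : ℤ) ≤ (l : ℤ) * d} ≃
        {k : ℕ // k ∈ S a b d l} := by
      apply Equiv.subtypeEquivRight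
      intro k
      simp only [S, Finset.mem_filter, Finset.mem_Ioc, gam]
      have hcast : ((l : ℤ) - 1) * (d : ℤ) = (((l - 1) * d : ℕ) : ℤ) := by
        push_cast [Nat.cast_sub hl1]
        ring
      constructor
      · rintro ⟨hgam, hk1, hk2⟩
        refine ⟨⟨?_, ?_⟩, hgam⟩
        · rw [hcast] at hk1
          exact_mod_cast hk1
        · exact_mod_cast hk2
      · rintro ⟨⟨hk1, hk2⟩, hgam⟩
        refine ⟨hgam, ?_, by exact_mod_cast hk2⟩
        rw [hcast]
        exact_mod_cast hk1
    rw [Nat.card_congr he, Nat.card_eq_finsetCard]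
    exact cnt ha2 had hd5 hb2 hsum hprod l hl1
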